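/- Let F0, F1, F2 be a positively oriented orthonormal basis of ℝ³ (so F0 × F1 = F2, F1 × F2 = F0, F2 × F0 = F1), let d > 0, D := dF0, t0 ∈ ℝ, let c₀, c₁, c₂, a₀₁, a₀₂, a₁₁, a₁₂ ∈ ℝ, and let B ∈ ℝ³ be orthogonal to F0. Define Y₁(t) := (c₀ + c₁(t−t0) + c₂(t−t0)²)F0 + (a₀₁F1 + a₀₂F2) + (t−t0)(a₁₁F1 + a₁₂F2) + cos(d(t−t0))B − sin(d(t−t0))(F0 × B). Then for all t ∈ ℝ: Y₁''(t) − Y₁'(t) × D = 2c₂·F0 − d·a₁₂·F1 + d·a₁₁·F2. Consequently, for any δ, the curve V̂₁ := D + δY₁ satisfies V̂₁''(t) − V̂₁'(t) × V̂₁(t) = δ(2c₂F0 − d a₁₂F1 + d a₁₁F2) − δ²·(Y₁'(t) × Y₁(t)) for all t. -/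

import Mathlib

noncomputable section
open scoped RealInnerProductSpace

/-- `ℝ³` with the Euclidean inner product. -/
abbrev E3 : Type := EuclideanSpace ℝ (Fin 3)

/-- The cross product on `ℝ³`; with `⁅u,v⁆ := cross u v`, `ℝ³` is the Lie algebra `so(3)`. -/
def cross (u v : E3) : E3 :=
  (WithLp.equiv 2 (Fin 3 → ℝ)).symm
    ![u 1 * v 2 - u 2 * v 1, u 2 * v 0 - u 0 * v 2, u 0 * v 1 - u 1 * v 0]

lemma crossE3_add_left (u w v : E3) : cross (u + w) v = cross u v + cross w v := by
  ext i; fin_cases i <;> simp [cross] <;> ring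

lemma crossE3_add_right (u v w : E3) : cross u (v + w) = cross u v + cross u w := by
  ext i; fin_cases i <;> simp [cross] <;> ring

lemma crossE3_sub_left (u w v : E3) : cross (u - w) v = cross u v - cross w v := by
  ext i; fin_cases i <;> simp [cross] <;> ring

lemma crossE3_smul_left (a : ℝ) (u v : E3) : cross (a • u) v = a • cross u v := by
  ext i; fin_cases i <;> simp [cross] <;> ring

lemma crossE3_smul_right (a : ℝ) (u v : E3) : cross u (a • v) = a • cross u v := by
  ext i; fin_cases i <;> simp [cross] <;> ring

lemma crossE3_anticomm (u v : E3) : cross u v = - cross v u := by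
  ext i; fin_cases i <;> simp [cross] <;> ring

lemma crossE3_self (u : E3) : cross u u = 0 := by
  ext i; fin_cases i <;> simp [cross] <;> ring

lemma cross_crossE3_self (u v : E3) (hu : ‖u‖ = 1) (hv : ⟪v, u⟫ = 0) :
    cross (cross u v) u = v := by
  have hu1 : ⟪u, u⟫ = 1 := by
    rw [real_inner_self_eq_norm_sq, hu]; norm_num
  simp only [PiLp.inner_apply, RCLike.inner_apply, conj_trivial, Fin.sum_univ_three] at hu1 hv
  ext i; fin_cases i <;> simp [cross] <;>
    [linear_combination (v 0) * hu1 - (u 0) * hv;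
     linear_combination (v 1) * hu1 - (u 1) * hv;
     linear_combination (v 2) * hu1 - (u 2) * hv]

/-- For the general solution `Y₁` of the first variational equation along `D = d·F0`,
one has `Y₁'' − Y₁' × D = 2c₂·F0 − d·a₁₂·F1 + d·a₁₁·F2` (a constant), and hence
`V̂₁ := D + δY₁` satisfies
`V̂₁'' − V̂₁' × V̂₁ = δ(2c₂F0 − d a₁₂F1 + d a₁₁F2) − δ²·(Y₁' × Y₁)`. -/
theorem stmt_15 (F0 F1 F2 : E3)
    (hn0 : ‖F0‖ = 1) (hn1 : ‖F1‖ = 1) (hn2 : ‖F2‖ = 1)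
    (h01 : cross F0 F1 = F2) (h12 : cross F1 F2 = F0) (h20 : cross F2 F0 = F1)
    (d : ℝ) (hd : 0 < d) (t0 c₀ c₁ c₂ a01 a02 a11 a12 : ℝ)
    (B : E3) (hB : ⟪B, F0⟫ = 0)
    (Y₁ : ℝ → E3)
    (hY₁ : ∀ t : ℝ,
        Y₁ t = (c₀ + c₁ * (t - t0) + c₂ * (t - t0) ^ 2) • F0 + (a01 • F1 + a02 • F2) +
            (t - t0) • (a11 • F1 + a12 • F2) +
            Real.cos (d * (t - t0)) • B - Real.sin (d * (t - t0)) • cross F0 B) :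
    (∀ t : ℝ,
        iteratedDeriv 2 Y₁ t - cross (deriv Y₁ t) (d • F0) =
          (2 * c₂) • F0 - (d * a12) • F1 + (d * a11) • F2) ∧
      ∀ δ t : ℝ,
        iteratedDeriv 2 (fun s => d • F0 + δ • Y₁ s) t -
            cross (deriv (fun s => d • F0 + δ • Y₁ s) t) (d • F0 + δ • Y₁ t) =
          δ • ((2 * c₂) • F0 - (d * a12) • F1 + (d * a11) • F2) -
            (δ ^ 2) • cross (deriv Y₁ t) (Y₁ t) := by
  have hYeq : Y₁ = fun t => (c₀ + c₁ * (t - t0) + c₂ * (t - t0) ^ 2) • F0 +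
      (a01 • F1 + a02 • F2) + (t - t0) • (a11 • F1 + a12 • F2) +
      Real.cos (d * (t - t0)) • B - Real.sin (d * (t - t0)) • cross F0 B := funext hY₁
  set Yd : ℝ → E3 := fun t =>
      (c₁ + 2 * c₂ * (t - t0)) • F0 + (a11 • F1 + a12 • F2) -
        (d * Real.sin (d * (t - t0))) • B - (d * Real.cos (d * (t - t0))) • cross F0 B
    with hYd
  set YDD : ℝ → E3 := fun t =>
      (2 * c₂) • F0 - (d ^ 2 * Real.cos (d * (t - t0))) • B +
        (d ^ 2 * Real.sin (d * (t - t0))) • cross F0 B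
    with hYDD
  have h1 : ∀ t : ℝ, HasDerivAt (fun s : ℝ => s - t0) 1 t := fun t =>
    (hasDerivAt_id t).sub_const t0
  have hdt : ∀ t : ℝ, HasDerivAt (fun s : ℝ => d * (s - t0)) d t := fun t => by
    simpa using (h1 t).const_mul d
  have hDY : ∀ t : ℝ, HasDerivAt Y₁ (Yd t) t := by
    intro t
    rw [hYeq]
    have hp : HasDerivAt (fun s : ℝ => c₀ + c₁ * (s - t0) + c₂ * (s - t0) ^ 2)
        (c₁ + 2 * c₂ * (t - t0)) t := by
      have := ((h1 t).const_mul c₁).const_add c₀ |>.add (((h1 t).pow 2).const_mul c₂)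
      convert this using 1 <;> first | rfl | ring
    have hcos : HasDerivAt (fun s : ℝ => Real.cos (d * (s - t0)))
        (-(d * Real.sin (d * (t - t0)))) t := by
      have := (Real.hasDerivAt_cos (d * (t - t0))).comp t (hdt t)
      convert this using 1 <;> first | rfl | ring
    have hsin : HasDerivAt (fun s : ℝ => Real.sin (d * (s - t0)))
        (d * Real.cos (d * (t - t0))) t := by
      have := (Real.hasDerivAt_sin (d * (t - t0))).comp t (hdt t)
      convert this using 1 <;> first | rfl | ring
    have := ((((hp.smul_const F0).add_const (a01 • F1 + a02 • F2)).add
        ((h1 t).smul_const (a11 • F1 + a12 • F2))).add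
        (hcos.smul_const B)).sub (hsin.smul_const (cross F0 B))
    convert this using 1 <;> first | rfl | (rw [hYd]; module)
  have hDYd : ∀ t : ℝ, HasDerivAt Yd (YDD t) t := by
    intro t
    have hp : HasDerivAt (fun s : ℝ => c₁ + 2 * c₂ * (s - t0)) (2 * c₂) t := by
      simpa using ((h1 t).const_mul (2 * c₂)).const_add c₁
    have hcos : HasDerivAt (fun s : ℝ => d * Real.cos (d * (s - t0)))
        (-(d ^ 2 * Real.sin (d * (t - t0)))) t := by
      have := ((Real.hasDerivAt_cos (d * (t - t0))).comp t (hdt t)).const_mul d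
      convert this using 1 <;> first | rfl | ring
    have hsin : HasDerivAt (fun s : ℝ => d * Real.sin (d * (s - t0)))
        (d ^ 2 * Real.cos (d * (t - t0))) t := by
      have := ((Real.hasDerivAt_sin (d * (t - t0))).comp t (hdt t)).const_mul d
      convert this using 1 <;> first | rfl | ring
    have := (((hp.smul_const F0).add_const (a11 • F1 + a12 • F2)).sub
        (hsin.smul_const B)).sub (hcos.smul_const (cross F0 B))
    convert this using 1 <;> first | rfl | (rw [hYDD]; module)
  have hderiv : deriv Y₁ = Yd := funext fun t => (hDY t).deriv
  have hit2 : ∀ t, iteratedDeriv 2 Y₁ t = YDD t := by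
    intro t
    rw [show (2 : ℕ) = 1 + 1 from rfl, iteratedDeriv_succ, iteratedDeriv_one, hderiv]
    exact (hDYd t).deriv
  -- cross product facts
  have h10 : cross F1 F0 = -F2 := by rw [crossE3_anticomm, h01]
  have hB0 : cross B F0 = -cross F0 B := crossE3_anticomm B F0
  have hFB0 : cross (cross F0 B) F0 = B := cross_crossE3_self F0 B hn0 hB
  have hmain : ∀ t : ℝ,
      iteratedDeriv 2 Y₁ t - cross (deriv Y₁ t) (d • F0) =
        (2 * c₂) • F0 - (d * a12) • F1 + (d * a11) • F2 := by
    intro t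
    rw [hit2, hderiv, hYd, hYDD]
    simp only [crossE3_add_left, crossE3_sub_left, crossE3_smul_left, crossE3_smul_right,
      crossE3_self, h10, h20, hB0, hFB0, smul_neg, smul_zero]
    module
  refine ⟨hmain, fun δ t => ?_⟩
  have hD2 : deriv (fun s => d • F0 + δ • Y₁ s) t = δ • Yd t := by
    exact (((hDY t).const_smul δ).const_add (d • F0)).deriv
  have hI2 : iteratedDeriv 2 (fun s => d • F0 + δ • Y₁ s) t = δ • YDD t := by
    have hdall : deriv (fun s => d • F0 + δ • Y₁ s) = fun t => δ • Yd t :=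
      funext fun t => (((hDY t).const_smul δ).const_add (d • F0)).deriv
    rw [show (2 : ℕ) = 1 + 1 from rfl, iteratedDeriv_succ, iteratedDeriv_one, hdall]
    exact ((hDYd t).const_smul δ).deriv
  rw [hI2, hD2, hderiv]
  have hexp := hmain t
  rw [hit2, hderiv] at hexp
  rw [crossE3_smul_right] at hexp
  rw [crossE3_smul_left, crossE3_add_right, crossE3_smul_right, crossE3_smul_right, ← hexp]
  module
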